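/- arXiv:1506.05667 — 3 statements merged into one kernel-verified Lean document; each statement's English description precedes it below -/
import Mathlib

section
/- Let 𝒢 be a family of connected non-trivial graphs on a common vertex set V, let H be a non-trivial graph and let B be an adjacency basis of H. Then for every family ℋ ⊆ 𝒢_B(H) such that H ∈ ℋ, Sd(𝒢⊙ℋ) = |V| · dim_A(H). -/
open SimpleGraph

/-- `S` is a metric generator for `G`: every pair of distinct vertices is
distinguished by some element of `S` via the shortest-path distance. -/
def IsMetricGen {V : Type*} (G : SimpleGraph V) (S : Set V) : Prop :=
  ∀ u v : V, u ≠ v → ∃ s ∈ S, G.dist s u ≠ G.dist s v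

/-- `S` is an adjacency generator for `G`. -/
def IsAdjGen {V : Type*} (G : SimpleGraph V) (S : Set V) : Prop :=
  ∀ x y : V, x ∉ S → y ∉ S → x ≠ y → ∃ s ∈ S, Xor' (G.Adj s x) (G.Adj s y)

/-- `S` is a simultaneous metric generator for the family `𝒢`. -/
def IsSimMetricGen {V : Type*} (𝒢 : Set (SimpleGraph V)) (S : Set V) : Prop :=
  ∀ G ∈ 𝒢, IsMetricGen G S

/-- `S` is a simultaneous adjacency generator for the family `ℋ`. -/
def IsSimAdjGen {V : Type*} (ℋ : Set (SimpleGraph V)) (S : Set V) : Prop :=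
  ∀ H ∈ ℋ, IsAdjGen H S

/-- The simultaneous metric dimension of a family of graphs. -/
noncomputable def Sd {V : Type*} (𝒢 : Set (SimpleGraph V)) : ℕ :=
  sInf {n | ∃ S : Set V, S.ncard = n ∧ IsSimMetricGen 𝒢 S}

/-- The simultaneous adjacency dimension of a family of graphs. -/
noncomputable def SdA {V : Type*} (ℋ : Set (SimpleGraph V)) : ℕ :=
  sInf {n | ∃ S : Set V, S.ncard = n ∧ IsSimAdjGen ℋ S}

/-- The adjacency dimension of a graph. -/
noncomputable def adjDim {V : Type*} (G : SimpleGraph V) : ℕ := SdA {G}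

/-- `B` is an adjacency basis of `G`. -/
def IsAdjBasis {V : Type*} (G : SimpleGraph V) (B : Set V) : Prop :=
  IsAdjGen G B ∧ B.ncard = adjDim G

/-- `B` is a simultaneous adjacency basis of the family `ℋ`. -/
def IsSimAdjBasis {V : Type*} (ℋ : Set (SimpleGraph V)) (B : Set V) : Prop :=
  IsSimAdjGen ℋ B ∧ B.ncard = SdA ℋ

/-- `D` is a dominating set of `G`. -/
def IsDomSet {V : Type*} (G : SimpleGraph V) (D : Set V) : Prop :=
  ∀ v ∉ D, ∃ u ∈ D, G.Adj u v

/-- `D` is a simultaneous dominating set of the family `𝒢`. -/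
def IsSimDomSet {V : Type*} (𝒢 : Set (SimpleGraph V)) (D : Set V) : Prop :=
  ∀ G ∈ 𝒢, IsDomSet G D

/-- The simultaneous domination number of a family of graphs. -/
noncomputable def Sgamma {V : Type*} (𝒢 : Set (SimpleGraph V)) : ℕ :=
  sInf {n | ∃ D : Set V, D.ncard = n ∧ IsSimDomSet 𝒢 D}

/-- The domination number of a graph. -/
noncomputable def domNum {V : Type*} (G : SimpleGraph V) : ℕ := Sgamma {G}

/-- `γ'(G) = min over vertices `v` of `γ(G - v)`. -/
noncomputable def gammaPrime {V : Type*} (G : SimpleGraph V) : ℕ :=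
  sInf {n | ∃ v : V, n = domNum (G.induce {v}ᶜ)}

/-- The corona product `G ⊙ H`: one copy of `G` together with a copy of `H`
for each vertex `i` of `G`, joining `i` to every vertex of its copy. -/
def corona {V V' : Type*} (G : SimpleGraph V) (H : SimpleGraph V') :
    SimpleGraph (V ⊕ V × V') where
  Adj x y :=
    match x, y with
    | Sum.inl i, Sum.inl j => G.Adj i j
    | Sum.inl i, Sum.inr p => i = p.1
    | Sum.inr p, Sum.inl j => p.1 = j
    | Sum.inr p, Sum.inr q => p.1 = q.1 ∧ H.Adj p.2 q.2
  symm := by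
    constructor
    rintro (i | p) (j | q) h
    · exact G.adj_symm h
    · exact h.symm
    · exact h.symm
    · exact ⟨h.1.symm, H.adj_symm h.2⟩
  loopless := by
    constructor
    rintro (i | p) h
    · exact G.loopless.irrefl i h
    · exact H.loopless.irrefl p.2 h.2

/-- The family `{G ⊙ H : G ∈ 𝒢, H ∈ ℋ}` of corona products. -/
def coronaFam {V V' : Type*} (𝒢 : Set (SimpleGraph V)) (ℋ : Set (SimpleGraph V')) :
    Set (SimpleGraph (V ⊕ V × V')) :=
  {K | ∃ G ∈ 𝒢, ∃ H ∈ ℋ, K = corona G H}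

/-- The join `G + H` of two (vertex-disjoint) graphs. -/
def joinG {V₁ V₂ : Type*} (G : SimpleGraph V₁) (H : SimpleGraph V₂) :
    SimpleGraph (V₁ ⊕ V₂) where
  Adj x y :=
    match x, y with
    | Sum.inl a, Sum.inl b => G.Adj a b
    | Sum.inl _, Sum.inr _ => True
    | Sum.inr _, Sum.inl _ => True
    | Sum.inr a, Sum.inr b => H.Adj a b
  symm := by
    constructor
    rintro (a | a) (b | b) h
    · exact G.adj_symm h
    · trivial
    · trivial
    · exact H.adj_symm h
  loopless := by
    constructor
    rintro (a | a) h
    · exact G.loopless.irrefl a h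
    · exact H.loopless.irrefl a h

/-- The family `{G + H : G ∈ 𝒢, H ∈ ℋ}` of joins. -/
def joinFam {V₁ V₂ : Type*} (𝒢 : Set (SimpleGraph V₁)) (ℋ : Set (SimpleGraph V₂)) :
    Set (SimpleGraph (V₁ ⊕ V₂)) :=
  {K | ∃ G ∈ 𝒢, ∃ H ∈ ℋ, K = joinG G H}

/-- The family `𝒢_B(G)`: all graphs `G'` such that, for some permutation `f` of the
vertex set fixing `B` pointwise, `N_{G'}(x) = f(N_G(x))` for every `x ∈ B`. -/
def GBfam {V : Type*} (G : SimpleGraph V) (B : Set V) : Set (SimpleGraph V) :=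
  {G' | ∃ f : Equiv.Perm V, (∀ x ∈ B, f x = x) ∧
    ∀ x ∈ B, G'.neighborSet x = f '' (G.neighborSet x)}
section CoronaAux

open scoped Classical

variable {V V' : Type*} {G : SimpleGraph V} {H' : SimpleGraph V'}

lemma corona_adj_inl_inl {i j : V} :
    (corona G H').Adj (Sum.inl i) (Sum.inl j) ↔ G.Adj i j := Iff.rfl

lemma corona_adj_inl_inr {i : V} {p : V × V'} :
    (corona G H').Adj (Sum.inl i) (Sum.inr p) ↔ i = p.1 := Iff.rfl

lemma corona_adj_inr_inl {j : V} {p : V × V'} :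
    (corona G H').Adj (Sum.inr p) (Sum.inl j) ↔ p.1 = j := Iff.rfl

lemma corona_adj_inr_inr {p q : V × V'} :
    (corona G H').Adj (Sum.inr p) (Sum.inr q) ↔ p.1 = q.1 ∧ H'.Adj p.2 q.2 := Iff.rfl

lemma corona_connected (hG : G.Connected) : (corona G H').Connected := by
  have hr : ∀ i j : V, (corona G H').Reachable (Sum.inl i) (Sum.inl j) :=
    fun i j => by exact (hG i j).map ⟨Sum.inl, fun h => h⟩
  have hri : ∀ (i : V) (x : V'), (corona G H').Reachable (Sum.inr (i, x)) (Sum.inl i) :=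
    fun i x => (Adj.reachable (corona_adj_inr_inl.mpr rfl))
  rw [SimpleGraph.connected_iff]
  refine ⟨?_, ⟨Sum.inl hG.nonempty.some⟩⟩
  rintro (i | ⟨i, x⟩) (j | ⟨j, y⟩)
  · exact hr i j
  · exact (hr i j).trans (hri j y).symm
  · exact (hri i x).trans (hr i j)
  · exact ((hri i x).trans (hr i j)).trans (hri j y).symm

lemma corona_walk_support_aux {i : V} {y : V'} :
    ∀ {s t : V ⊕ V × V'} (w : (corona G H').Walk s t), t = Sum.inr (i, y) →
      Sum.inl i ∈ w.support ∨ ∃ x, s = Sum.inr (i, x) := by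
  intro s t w
  induction w with
  | nil => rintro rfl; exact Or.inr ⟨y, rfl⟩
  | @cons s z _ h p ih =>
    intro ht
    rcases ih ht with hi | ⟨x, rfl⟩
    · exact Or.inl (by simp [SimpleGraph.Walk.support_cons, hi])
    · match s, h with
      | Sum.inl k, h =>
        have hk : k = i := h
        subst hk
        exact Or.inl (by simp [SimpleGraph.Walk.support_cons])
      | Sum.inr (k, c), h =>
        have hk : k = i := h.1
        subst hk
        exact Or.inr ⟨c, rfl⟩

lemma corona_walk_support {i : V} {y : V'} {s : V ⊕ V × V'}
    (w : (corona G H').Walk s (Sum.inr (i, y))) :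
    Sum.inl i ∈ w.support ∨ ∃ x, s = Sum.inr (i, x) :=
  corona_walk_support_aux w rfl

/-- distance from outside a copy to a vertex of the copy goes through the root -/
lemma corona_dist_outside (hG : G.Connected) {i : V} {y : V'} {s : V ⊕ V × V'}
    (h2 : ∀ x : V', s ≠ Sum.inr (i, x)) :
    (corona G H').dist s (Sum.inr (i, y))
      = (corona G H').dist s (Sum.inl i) + 1 := by
  have hc : (corona G H').Connected := corona_connected hG
  obtain ⟨p, hp⟩ := hc.exists_walk_length_eq_dist s (Sum.inl i)
  obtain ⟨q, hq⟩ := hc.exists_walk_length_eq_dist s (Sum.inr (i, y))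
  have hup : (corona G H').dist s (Sum.inr (i, y))
      ≤ (corona G H').dist s (Sum.inl i) + 1 := by
    have hadj : (corona G H').Adj (Sum.inl i) (Sum.inr (i, y)) := corona_adj_inl_inr.mpr rfl
    have := SimpleGraph.dist_le (p.append (SimpleGraph.Walk.cons hadj SimpleGraph.Walk.nil))
    simpa [SimpleGraph.Walk.length_append, hp] using this
  have hmem : Sum.inl i ∈ q.support := by
    rcases corona_walk_support q with hmem | ⟨x, hx⟩
    · exact hmem
    · exact absurd hx (h2 x)
  have hsplit := congrArg SimpleGraph.Walk.length (q.take_spec hmem)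
  rw [SimpleGraph.Walk.length_append] at hsplit
  have l1 : (corona G H').dist s (Sum.inl i) ≤ (q.takeUntil _ hmem).length :=
    SimpleGraph.dist_le _
  have l2 : 1 ≤ (q.dropUntil _ hmem).length := by
    by_contra hcon
    have h0 : (q.dropUntil (Sum.inl i) hmem).length = 0 := by omega
    exact (by simp : Sum.inl i ≠ Sum.inr (i, y)) (SimpleGraph.Walk.eq_of_length_eq_zero h0)
  omega

lemma corona_dist_inr_inl {i : V} {b : V'} :
    (corona G H').dist (Sum.inr (i, b)) (Sum.inl i) = 1 :=
  SimpleGraph.dist_eq_one_iff_adj.mpr (corona_adj_inr_inl.mpr rfl)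

lemma corona_dist_same_copy (hG : G.Connected) {i : V} {b x : V'} (hbx : b ≠ x) :
    (corona G H').dist (Sum.inr (i, b)) (Sum.inr (i, x))
      = if H'.Adj b x then 1 else 2 := by
  have hc : (corona G H').Connected := corona_connected hG
  split_ifs with hadj
  · exact SimpleGraph.dist_eq_one_iff_adj.mpr (corona_adj_inr_inr.mpr ⟨rfl, hadj⟩)
  · have hle : (corona G H').dist (Sum.inr (i, b)) (Sum.inr (i, x)) ≤ 2 := by
      have h2 := SimpleGraph.dist_le (SimpleGraph.Walk.cons ((corona_adj_inr_inl (G := G) (H' := H') (j := i) (p := (i, b))).mpr rfl)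
          (SimpleGraph.Walk.cons ((corona_adj_inl_inr (i := i) (p := (i, x))).mpr rfl)
            SimpleGraph.Walk.nil))
      simpa using h2
    have hne1 : (corona G H').dist (Sum.inr (i, b)) (Sum.inr (i, x)) ≠ 1 := by
      intro h1
      exact hadj (corona_adj_inr_inr.mp (SimpleGraph.dist_eq_one_iff_adj.mp h1)).2
    have hne0 : (corona G H').dist (Sum.inr (i, b)) (Sum.inr (i, x)) ≠ 0 :=
      (hc.pos_dist_of_ne (by simp [hbx])).ne'
    omega

lemma corona_dist_inr_inl_far (hG : G.Connected) {i j : V} (hij : i ≠ j) {b : V'} :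
    2 ≤ (corona G H').dist (Sum.inr (i, b)) (Sum.inl j) := by
  have hc : (corona G H').Connected := corona_connected hG
  have hne0 : (corona G H').dist (Sum.inr (i, b)) (Sum.inl j) ≠ 0 :=
    (hc.pos_dist_of_ne (by simp)).ne'
  have hne1 : (corona G H').dist (Sum.inr (i, b)) (Sum.inl j) ≠ 1 := by
    intro h1
    exact hij (corona_adj_inr_inl.mp (SimpleGraph.dist_eq_one_iff_adj.mp h1))
  omega

lemma isAdjGen_nonempty [Nontrivial V'] {H : SimpleGraph V'} {B : Set V'}
    (hB : IsAdjGen H B) : B.Nonempty := by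
  by_contra h
  rw [Set.not_nonempty_iff_eq_empty] at h
  subst h
  obtain ⟨x, y, hxy⟩ := exists_pair_ne V'
  obtain ⟨s, hs, -⟩ := hB x y (by simp) (by simp) hxy
  simp at hs

lemma isAdjGen_of_GBfam {H H' : SimpleGraph V'} {B : Set V'} (hB : IsAdjGen H B)
    (hmem : H' ∈ GBfam H B) : IsAdjGen H' B := by
  obtain ⟨f, hfix, hnb⟩ := hmem
  intro x y hx hy hxy
  have key : ∀ z, f.symm z ∈ B → z ∈ B := by
    intro z hz
    have h := hfix _ hz
    rw [Equiv.apply_symm_apply] at h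
    rwa [h]
  obtain ⟨b, hbB, hxor⟩ := hB (f.symm x) (f.symm y) (fun h => hx (key _ h))
    (fun h => hy (key _ h)) (fun h => hxy (by simpa using congrArg f h))
  refine ⟨b, hbB, ?_⟩
  have hiff : ∀ z, H'.Adj b z ↔ H.Adj b (f.symm z) := by
    intro z
    have h1 : z ∈ H'.neighborSet b ↔ z ∈ f '' (H.neighborSet b) := by rw [hnb b hbB]
    simpa [SimpleGraph.mem_neighborSet, Set.mem_image_equiv] using h1
  rw [Xor'] at hxor ⊢
  rw [hiff x, hiff y]
  exact hxor

lemma corona_metricGen [Nontrivial V] (hG : G.Connected) {B : Set V'}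
    (hB' : IsAdjGen H' B) (hBne : B.Nonempty) :
    IsMetricGen (corona G H') (Sum.inr '' ((Set.univ : Set V) ×ˢ B)) := by
  have hc : (corona G H').Connected := corona_connected hG
  have hmemS : ∀ (i : V) (b : V'), b ∈ B →
      Sum.inr (i, b) ∈ (Sum.inr '' ((Set.univ : Set V) ×ˢ B) : Set (V ⊕ V × V')) := by
    intro i b hb
    exact ⟨(i, b), by simp [hb], rfl⟩
  obtain ⟨b₀, hb₀⟩ := hBne
  -- helper : distinguish inl i from inr (j, y)
  have helper : ∀ (i j : V) (y : V'),
      ∃ s ∈ (Sum.inr '' ((Set.univ : Set V) ×ˢ B) : Set (V ⊕ V × V')),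
        (corona G H').dist s (Sum.inl i) ≠ (corona G H').dist s (Sum.inr (j, y)) := by
    intro i j y
    rcases eq_or_ne i j with rfl | hij
    · obtain ⟨k, hk⟩ := exists_ne i
      refine ⟨Sum.inr (k, b₀), hmemS k b₀ hb₀, ?_⟩
      rw [corona_dist_outside hG (fun x h => hk (congrArg Prod.fst (Sum.inr.inj h)))]
      omega
    · refine ⟨Sum.inr (i, b₀), hmemS i b₀ hb₀, ?_⟩
      rw [corona_dist_inr_inl,
        corona_dist_outside hG (fun x h => hij (congrArg Prod.fst (Sum.inr.inj h)))]
      have := corona_dist_inr_inl_far (H' := H') hG hij (b := b₀) (j := j)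
      omega
  intro u v huv
  rcases u with i | ⟨i, x⟩ <;> rcases v with j | ⟨j, y⟩
  · -- inl inl
    have hij : i ≠ j := by simpa using huv
    refine ⟨Sum.inr (i, b₀), hmemS i b₀ hb₀, ?_⟩
    rw [corona_dist_inr_inl]
    have := corona_dist_inr_inl_far (H' := H') hG hij (b := b₀)
    omega
  · exact helper i j y
  · obtain ⟨s, hs, hd⟩ := helper j i x
    exact ⟨s, hs, hd.symm⟩
  · -- inr inr
    rcases eq_or_ne i j with rfl | hij
    · -- same copy
      have hxy : x ≠ y := by simpa using huv
      by_cases hx : x ∈ B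
      · refine ⟨Sum.inr (i, x), hmemS i x hx, ?_⟩
        rw [SimpleGraph.dist_self]
        exact (hc.pos_dist_of_ne huv).ne
      by_cases hy : y ∈ B
      · refine ⟨Sum.inr (i, y), hmemS i y hy, ?_⟩
        rw [SimpleGraph.dist_self]
        exact (hc.pos_dist_of_ne huv.symm).ne'
      obtain ⟨b, hbB, hxor⟩ := hB' x y hx hy hxy
      have hbx : b ≠ x := fun h => hx (h ▸ hbB)
      have hby : b ≠ y := fun h => hy (h ▸ hbB)
      refine ⟨Sum.inr (i, b), hmemS i b hbB, ?_⟩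
      rw [corona_dist_same_copy hG hbx, corona_dist_same_copy hG hby]
      rcases hxor with ⟨h1, h2⟩ | ⟨h1, h2⟩ <;> simp [h1, h2]
    · -- different copies
      refine ⟨Sum.inr (i, b₀), hmemS i b₀ hb₀, ?_⟩
      have h1 : (corona G H').dist (Sum.inr (i, b₀)) (Sum.inr (i, x)) ≤ 2 := by
        rcases eq_or_ne b₀ x with rfl | hbx
        · rw [SimpleGraph.dist_self]; omega
        · rw [corona_dist_same_copy hG hbx]
          split_ifs <;> omega
      have h2 : (corona G H').dist (Sum.inr (i, b₀)) (Sum.inr (j, y))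
          = (corona G H').dist (Sum.inr (i, b₀)) (Sum.inl j) + 1 :=
        corona_dist_outside hG (fun c h => hij (congrArg Prod.fst (Sum.inr.inj h)))
      have h3 := corona_dist_inr_inl_far (H' := H') hG hij (b := b₀) (j := j)
      omega

lemma corona_lower (hG : G.Connected) {S : Set (V ⊕ V × V')}
    (hS : IsMetricGen (corona G H') S) (i : V) :
    IsAdjGen H' {b | Sum.inr (i, b) ∈ S} := by
  intro x y hx hy hxy
  obtain ⟨s, hsS, hd⟩ := hS (Sum.inr (i, x)) (Sum.inr (i, y)) (by simp [hxy])
  have hcase : ∃ c, s = Sum.inr (i, c) := by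
    by_contra hcon
    push_neg at hcon
    rw [corona_dist_outside hG (fun c => hcon c),
      corona_dist_outside hG (fun c => hcon c)] at hd
    exact hd rfl
  obtain ⟨c, rfl⟩ := hcase
  have hcx : c ≠ x := fun h => hx (h ▸ hsS)
  have hcy : c ≠ y := fun h => hy (h ▸ hsS)
  refine ⟨c, hsS, ?_⟩
  rw [corona_dist_same_copy hG hcx, corona_dist_same_copy hG hcy] at hd
  by_cases h1 : H'.Adj c x <;> by_cases h2 : H'.Adj c y <;>
    simp [h1, h2, Xor'] at hd ⊢

lemma corona_ncard_lower [Fintype V] [Fintype V'] {S : Set (V ⊕ V × V')} {m : ℕ}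
    (h : ∀ i : V, m ≤ Set.ncard {b : V' | Sum.inr (i, b) ∈ S}) :
    Fintype.card V * m ≤ S.ncard := by
  classical
  set S' : Set (V × V') := Sum.inr ⁻¹' S with hS'
  have h1 : S'.ncard ≤ S.ncard := by
    have himg := Set.ncard_image_of_injective S' (Sum.inr_injective (α := V))
    rw [← himg]
    exact Set.ncard_le_ncard (Set.image_preimage_subset _ _) (Set.toFinite S)
  have hfin : S'.Finite := Set.toFinite _
  have h2 : S'.ncard = hfin.toFinset.card := Set.ncard_eq_toFinset_card _ hfin
  have h3 : hfin.toFinset.card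
      = ∑ i : V, (hfin.toFinset.filter (fun p => p.1 = i)).card :=
    Finset.card_eq_sum_card_fiberwise (fun p _ => Finset.mem_univ p.1)
  have h4 : ∀ i : V, m ≤ (hfin.toFinset.filter (fun p => p.1 = i)).card := by
    intro i
    refine le_trans (h i) ?_
    have hTfin : ({b : V' | Sum.inr (i, b) ∈ S} : Set V').Finite := Set.toFinite _
    rw [Set.ncard_eq_toFinset_card _ hTfin]
    apply Finset.card_le_card_of_injOn (fun b => (i, b))
    · intro b hb
      simp only [Finset.mem_coe, Set.Finite.mem_toFinset, Set.mem_setOf_eq] at hb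
      simp only [Finset.mem_coe, Finset.mem_filter, Set.Finite.mem_toFinset]
      exact ⟨hb, trivial⟩
    · intro a _ b _ hab
      simpa using congrArg Prod.snd hab
  calc Fintype.card V * m = ∑ _i : V, m := by
        rw [Finset.sum_const, Finset.card_univ, smul_eq_mul]
    _ ≤ ∑ i : V, (hfin.toFinset.filter (fun p => p.1 = i)).card :=
        Finset.sum_le_sum (fun i _ => h4 i)
    _ = S'.ncard := by rw [← h3, h2]
    _ ≤ S.ncard := h1

lemma corona_ncard_basis [Fintype V] (B : Set V') :
    (Sum.inr '' ((Set.univ : Set V) ×ˢ B) : Set (V ⊕ V × V')).ncard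
      = Fintype.card V * B.ncard := by
  rw [Set.ncard_image_of_injective _ Sum.inr_injective]
  rw [← Nat.card_coe_set_eq, ← Nat.card_coe_set_eq]
  rw [Nat.card_congr (Equiv.Set.prod _ _)]
  rw [Nat.card_prod, Nat.card_congr (Equiv.Set.univ V), Nat.card_eq_fintype_card]

end CoronaAux
theorem statement_3 {V V' : Type*} [Fintype V] [Fintype V'] [Nontrivial V] [Nontrivial V']
    (𝒢 : Set (SimpleGraph V)) (h𝒢ne : 𝒢.Nonempty) (h𝒢 : ∀ G ∈ 𝒢, G.Connected)
    (H : SimpleGraph V') (B : Set V') (hB : IsAdjBasis H B)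
    (ℋ : Set (SimpleGraph V')) (hsub : ℋ ⊆ GBfam H B) (hH : H ∈ ℋ) :
    Sd (coronaFam 𝒢 ℋ) = Fintype.card V * adjDim H := by
  classical
  obtain ⟨hBgen, hBcard⟩ := hB
  have hBne : B.Nonempty := isAdjGen_nonempty hBgen
  have hS0card : (Sum.inr '' ((Set.univ : Set V) ×ˢ B) : Set (V ⊕ V × V')).ncard
      = Fintype.card V * adjDim H := by
    rw [corona_ncard_basis, hBcard]
  have hS0gen : IsSimMetricGen (coronaFam 𝒢 ℋ) (Sum.inr '' ((Set.univ : Set V) ×ˢ B)) := by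
    rintro K ⟨G, hG, H', hH', rfl⟩
    exact corona_metricGen (h𝒢 G hG) (isAdjGen_of_GBfam hBgen (hsub hH')) hBne
  have hmemSet : Fintype.card V * adjDim H
      ∈ {n | ∃ S : Set (V ⊕ V × V'), S.ncard = n ∧ IsSimMetricGen (coronaFam 𝒢 ℋ) S} :=
    ⟨_, hS0card, hS0gen⟩
  refine le_antisymm (Nat.sInf_le hmemSet) (le_csInf ⟨_, hmemSet⟩ ?_)
  rintro n ⟨S, rfl, hS⟩
  obtain ⟨G₀, hG₀⟩ := h𝒢ne
  have hK : corona G₀ H ∈ coronaFam 𝒢 ℋ := ⟨G₀, hG₀, H, hH, rfl⟩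
  have hSK : IsMetricGen (corona G₀ H) S := hS _ hK
  apply corona_ncard_lower
  intro i
  have hgen : IsAdjGen H {b : V' | Sum.inr (i, b) ∈ S} :=
    corona_lower (h𝒢 G₀ hG₀) hSK i
  have hsim : IsSimAdjGen {H} {b : V' | Sum.inr (i, b) ∈ S} := by
    rintro H'' hH''
    rw [Set.mem_singleton_iff] at hH''
    subst hH''
    exact hgen
  exact Nat.sInf_le ⟨_, rfl, hsim⟩
end

section
/- Let 𝒢 be a family of connected non-trivial graphs on a common vertex set V and let ℋ be a family of non-trivial graphs on a common vertex set V'. If there exists a simultaneous adjacency basis B of ℋ which is also a simultaneous dominating set of ℋ and which satisfies B ⊄ N_H(v) for every H ∈ ℋ and every v ∈ V', then Sd_A(𝒢⊙ℋ) = |V| · Sd_A(ℋ). -/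
open SimpleGraph

theorem statement_5 {V V' : Type*} [Fintype V] [Fintype V'] [Nontrivial V] [Nontrivial V']
    (𝒢 : Set (SimpleGraph V)) (h𝒢ne : 𝒢.Nonempty) (h𝒢 : ∀ G ∈ 𝒢, G.Connected)
    (ℋ : Set (SimpleGraph V')) (hℋne : ℋ.Nonempty)
    (B : Set V') (hB : IsSimAdjBasis ℋ B) (hdom : IsSimDomSet ℋ B)
    (hnb : ∀ H ∈ ℋ, ∀ v : V', ¬ B ⊆ H.neighborSet v) :
    SdA (coronaFam 𝒢 ℋ) = Fintype.card V * SdA ℋ := by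
  classical
  obtain ⟨G₀, hG₀⟩ := h𝒢ne
  obtain ⟨H₀, hH₀⟩ := hℋne
  have hBne : B.Nonempty := by
    by_contra h
    rw [Set.not_nonempty_iff_eq_empty] at h
    obtain ⟨u, w, huw⟩ := exists_pair_ne V'
    obtain ⟨s, hs, -⟩ := hB.1 H₀ hH₀ u w (by simp [h]) (by simp [h]) huw
    simp [h] at hs
  have hBk : B.ncard = SdA ℋ := hB.2
  set S : Set (V ⊕ V × V') := Sum.inr '' (Set.univ ×ˢ B) with hS
  have hmemS : ∀ (i : V) (v : V'), Sum.inr (i, v) ∈ S ↔ v ∈ B := by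
    intro i v
    simp [hS]
  have hmemS' : ∀ i : V, Sum.inl i ∉ S := by
    intro i
    simp [hS]
  have hScard : S.ncard = Fintype.card V * SdA ℋ := by
    rw [hS, Set.ncard_image_of_injective _ Sum.inr_injective,
      Set.ncard_eq_toFinset_card', Set.toFinset_prod, Finset.card_product,
      Set.toFinset_univ, Finset.card_univ, ← Set.ncard_eq_toFinset_card', hBk]
  have hSgen : IsSimAdjGen (coronaFam 𝒢 ℋ) S := by
    rintro K ⟨G, hG, H, hH, rfl⟩
    rintro (i | ⟨i, u⟩) (j | ⟨j, w⟩) hx hy hxy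
    · -- inl i, inl j
      have hij : i ≠ j := fun h => hxy (by rw [h])
      obtain ⟨b, hb⟩ := hBne
      exact ⟨Sum.inr (i, b), (hmemS i b).2 hb,
        Or.inl ⟨rfl, fun h => hij h⟩⟩
    · -- inl i, inr (j, w)
      have hw : w ∉ B := fun h => hy ((hmemS j w).2 h)
      by_cases hij : j = i
      · subst hij
        obtain ⟨b, hb, hbw⟩ := Set.not_subset.mp (hnb H hH w)
        exact ⟨Sum.inr (j, b), (hmemS j b).2 hb,
          Or.inl ⟨rfl, fun h => hbw (H.adj_symm h.2)⟩⟩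
      · obtain ⟨b, hb, hbw⟩ := hdom H hH w hw
        exact ⟨Sum.inr (j, b), (hmemS j b).2 hb,
          Or.inr ⟨⟨rfl, hbw⟩, fun h => hij h⟩⟩
    · -- inr (i, u), inl j
      have hu : u ∉ B := fun h => hx ((hmemS i u).2 h)
      by_cases hij : i = j
      · subst hij
        obtain ⟨b, hb, hbu⟩ := Set.not_subset.mp (hnb H hH u)
        exact ⟨Sum.inr (i, b), (hmemS i b).2 hb,
          Or.inr ⟨rfl, fun h => hbu (H.adj_symm h.2)⟩⟩
      · obtain ⟨b, hb, hbu⟩ := hdom H hH u hu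
        exact ⟨Sum.inr (i, b), (hmemS i b).2 hb,
          Or.inl ⟨⟨rfl, hbu⟩, fun h => hij h⟩⟩
    · -- inr (i, u), inr (j, w)
      have hu : u ∉ B := fun h => hx ((hmemS i u).2 h)
      have hw : w ∉ B := fun h => hy ((hmemS j w).2 h)
      by_cases hij : i = j
      · subst hij
        have huw : u ≠ w := fun h => hxy (by rw [h])
        obtain ⟨b, hb, hxor⟩ := hB.1 H hH u w hu hw huw
        refine ⟨Sum.inr (i, b), (hmemS i b).2 hb, ?_⟩
        rcases hxor with ⟨h1, h2⟩ | ⟨h1, h2⟩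
        · exact Or.inl ⟨⟨rfl, h1⟩, fun h => h2 h.2⟩
        · exact Or.inr ⟨⟨rfl, h1⟩, fun h => h2 h.2⟩
      · obtain ⟨b, hb, hbu⟩ := hdom H hH u hu
        exact ⟨Sum.inr (i, b), (hmemS i b).2 hb,
          Or.inl ⟨⟨rfl, hbu⟩, fun h => hij h.1⟩⟩
  have hmem : Fintype.card V * SdA ℋ ∈
      {n | ∃ S : Set (V ⊕ V × V'), S.ncard = n ∧ IsSimAdjGen (coronaFam 𝒢 ℋ) S} :=
    ⟨S, hScard, hSgen⟩
  refine le_antisymm (Nat.sInf_le hmem) (le_csInf ⟨_, hmem⟩ ?_)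
  rintro n ⟨T, rfl, hTgen⟩
  -- lower bound
  have hfiber : ∀ i : V, SdA ℋ ≤ {v : V' | Sum.inr (i, v) ∈ T}.ncard := by
    intro i
    apply Nat.sInf_le
    refine ⟨_, rfl, ?_⟩
    intro H hH u w hu hw huw
    obtain ⟨s, hs, hxor⟩ := hTgen (corona G₀ H) ⟨G₀, hG₀, H, hH, rfl⟩
      (Sum.inr (i, u)) (Sum.inr (i, w)) hu hw
      (fun h => huw (by injection (Sum.inr.inj h) with h1 h2))
    obtain (j | ⟨j, b⟩) := s
    · rcases hxor with ⟨h1, h2⟩ | ⟨h1, h2⟩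
      · exact absurd (h1 : j = i) (fun h => h2 h)
      · exact absurd (h1 : j = i) (fun h => h2 h)
    · rcases hxor with ⟨⟨hji, h1⟩, h2⟩ | ⟨⟨hji, h1⟩, h2⟩
      · subst hji
        exact ⟨b, hs, Or.inl ⟨h1, fun h => h2 ⟨rfl, h⟩⟩⟩
      · subst hji
        exact ⟨b, hs, Or.inr ⟨h1, fun h => h2 ⟨rfl, h⟩⟩⟩
  -- finset counting
  have hTfin : T.Finite := Set.toFinite T
  set P : Finset (V × V') := Finset.univ.filter (fun p => Sum.inr p ∈ T) with hP
  have hPT : P.card ≤ T.ncard := by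
    rw [Set.ncard_eq_toFinset_card' T]
    have : P.image Sum.inr ⊆ T.toFinset := by
      intro x hx
      simp only [Finset.mem_image] at hx
      obtain ⟨p, hp, rfl⟩ := hx
      simp only [hP, Finset.mem_filter] at hp
      simpa using hp.2
    calc P.card = (P.image Sum.inr).card :=
          (Finset.card_image_of_injective _ Sum.inr_injective).symm
      _ ≤ T.toFinset.card := Finset.card_le_card this
  have hPsum : P.card = ∑ i : V, (P.filter fun p => p.1 = i).card :=
    Finset.card_eq_sum_card_fiberwise (fun p _ => Finset.mem_univ p.1)
  have hfib : ∀ i : V, SdA ℋ ≤ (P.filter fun p => p.1 = i).card := by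
    intro i
    refine le_trans (hfiber i) ?_
    rw [Set.ncard_eq_toFinset_card']
    apply Finset.card_le_card_of_injOn (fun v => (i, v))
    · intro v hv
      simp only [Finset.mem_coe, Set.mem_toFinset, Set.mem_setOf_eq] at hv
      simp [hP, hv]
    · intro a _ b _ h
      exact (Prod.mk.injEq _ _ _ _ ▸ h).2
  calc Fintype.card V * SdA ℋ = ∑ _i : V, SdA ℋ := by
        rw [Finset.sum_const, Finset.card_univ, smul_eq_mul]
    _ ≤ ∑ i : V, (P.filter fun p => p.1 = i).card :=
        Finset.sum_le_sum (fun i _ => hfib i)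
    _ = P.card := hPsum.symm
    _ ≤ T.ncard := hPT
end

section
/- Let P_n be a path graph and C_n a cycle graph of order n ≥ 7. If n ≡ 1 (mod 5) or n ≡ 3 (mod 5), then no adjacency basis of P_n is a dominating set of P_n, and no adjacency basis of C_n is a dominating set of C_n. -/
open SimpleGraph

/-! ### Auxiliary development -/

/-- A common arithmetic description of adjacency in paths (`w = 0`) and
cycles (`w = 1`) on vertex labels. -/
def adjRel (n w x y : ℕ) : Prop :=
  x + 1 = y ∨ y + 1 = x ∨ (w = 1 ∧ (x = 0 ∧ y + 1 = n ∨ y = 0 ∧ x + 1 = n))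

lemma key1 (n w a b : ℕ) (hw : w ≤ 1) (hn : 7 ≤ n) (h5 : n % 5 = 1)
    (ha : a < n) (hb : b < n) (hab : a ≠ b)
    (hA : ¬(a % 5 = 1 ∨ a % 5 = 3)) (hB : ¬(b % 5 = 1 ∨ b % 5 = 3)) :
    ∃ m, m < n ∧ (m % 5 = 1 ∨ m % 5 = 3) ∧
      ((adjRel n w m a ∧ ¬ adjRel n w m b) ∨ (adjRel n w m b ∧ ¬ adjRel n w m a)) := by
  simp only [adjRel]
  by_cases h2 : a % 5 = 2
  · by_cases hc : b + 2 = a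
    · exact ⟨a + 1, by omega⟩
    · exact ⟨a - 1, by omega⟩
  · by_cases h4 : a % 5 = 4
    · by_cases hc : b + 2 = a
      · exact ⟨a - 3, by omega⟩
      · exact ⟨a - 1, by omega⟩
    · by_cases hc : a + 1 < n
      · by_cases hd : b = a + 2
        · exact ⟨b + 1, by omega⟩
        · exact ⟨a + 1, by omega⟩
      · by_cases hd : b % 5 = 0
        · exact ⟨b + 1, by omega⟩
        · exact ⟨b - 1, by omega⟩

lemma key3 (n w a b : ℕ) (hw : w ≤ 1) (hn : 8 ≤ n) (h5 : n % 5 = 3)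
    (ha : a < n) (hb : b < n) (hab : a ≠ b)
    (hA : ¬(((a % 5 = 1 ∨ a % 5 = 3) ∧ a + 2 ≠ n) ∨ a + 1 = n))
    (hB : ¬(((b % 5 = 1 ∨ b % 5 = 3) ∧ b + 2 ≠ n) ∨ b + 1 = n)) :
    ∃ m, m < n ∧ (((m % 5 = 1 ∨ m % 5 = 3) ∧ m + 2 ≠ n) ∨ m + 1 = n) ∧
      ((adjRel n w m a ∧ ¬ adjRel n w m b) ∨ (adjRel n w m b ∧ ¬ adjRel n w m a)) := by
  simp only [adjRel]
  by_cases e1 : a + 2 = n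
  · by_cases e2 : b = 0 ∧ w = 1
    · exact ⟨1, by omega⟩
    · exact ⟨n - 1, by omega⟩
  · by_cases e2 : b + 2 = n
    · by_cases e3 : a = 0 ∧ w = 1
      · exact ⟨1, by omega⟩
      · exact ⟨n - 1, by omega⟩
    · by_cases h2 : a % 5 = 2
      · by_cases hc : b + 2 = a
        · exact ⟨a + 1, by omega⟩
        · exact ⟨a - 1, by omega⟩
      · by_cases h4 : a % 5 = 4
        · by_cases hc : b + 2 = a
          · exact ⟨b - 1, by omega⟩
          · exact ⟨a - 1, by omega⟩
        · by_cases e4 : a = 0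
          · by_cases e5 : w = 1
            · exact ⟨n - 1, by omega⟩
            · by_cases e6 : b = 2
              · exact ⟨3, by omega⟩
              · exact ⟨1, by omega⟩
          · by_cases e5 : a + 3 = n
            · by_cases e6 : b % 5 = 2 ∨ b % 5 = 4
              · exact ⟨b - 1, by omega⟩
              · by_cases e7 : b = 0
                · by_cases e8 : w = 1
                  · exact ⟨n - 1, by omega⟩
                  · exact ⟨1, by omega⟩
                · exact ⟨b + 1, by omega⟩
            · by_cases e6 : b = a + 2
              · exact ⟨b + 1, by omega⟩
              · exact ⟨a + 1, by omega⟩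

lemma path_adjRel {n : ℕ} (u v : Fin n) :
    (pathGraph n).Adj u v ↔ adjRel n 0 u.val v.val := by
  rw [pathGraph_adj, adjRel]
  omega

lemma cycle_adjRel {n : ℕ} (hn : 2 ≤ n) (u v : Fin n) :
    (cycleGraph n).Adj u v ↔ adjRel n 1 u.val v.val := by
  rw [cycleGraph_adj']
  have h1 : (u - v).val = (n - v.val + u.val) % n := by rw [Fin.sub_def]
  have h2 : (v - u).val = (n - u.val + v.val) % n := by rw [Fin.sub_def]
  have hu := u.isLt
  have hv := v.isLt
  have e1 : (n - v.val + u.val) % n = n - v.val + u.val ∨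
      ((n - v.val + u.val) % n = n - v.val + u.val - n ∧ n ≤ n - v.val + u.val) := by
    rcases Nat.lt_or_ge (n - v.val + u.val) n with h | h
    · exact Or.inl (Nat.mod_eq_of_lt h)
    · exact Or.inr ⟨by rw [Nat.mod_eq_sub_mod h, Nat.mod_eq_of_lt (by omega)], h⟩
  have e2 : (n - u.val + v.val) % n = n - u.val + v.val ∨
      ((n - u.val + v.val) % n = n - u.val + v.val - n ∧ n ≤ n - u.val + v.val) := by
    rcases Nat.lt_or_ge (n - u.val + v.val) n with h | h
    · exact Or.inl (Nat.mod_eq_of_lt h)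
    · exact Or.inr ⟨by rw [Nat.mod_eq_sub_mod h, Nat.mod_eq_of_lt (by omega)], h⟩
  rw [h1, h2, adjRel]
  omega

lemma three_nbrs {n : ℕ} (G : SimpleGraph (Fin n)) (w : ℕ)
    (hadj : ∀ u v : Fin n, G.Adj u v ↔ adjRel n w u.val v.val)
    (s a b c : Fin n) (h1 : G.Adj s a) (h2 : G.Adj s b) (h3 : G.Adj s c) :
    a = b ∨ a = c ∨ b = c := by
  rw [hadj] at h1 h2 h3
  simp only [adjRel] at h1 h2 h3
  have := a.isLt; have := b.isLt; have := c.isLt; have := s.isLt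
  rw [Fin.ext_iff, Fin.ext_iff, Fin.ext_iff]
  omega

/-- The discharging argument: in a graph of maximum degree at most two, any
set that is simultaneously an adjacency generator and a dominating set has
at least `2n/5` elements. -/
lemma lower_bound {n : ℕ} (G : SimpleGraph (Fin n))
    (hdeg : ∀ s a b c : Fin n, G.Adj s a → G.Adj s b → G.Adj s c → a = b ∨ a = c ∨ b = c)
    (S : Set (Fin n)) (hgen : IsAdjGen G S) (hdom : IsDomSet G S) :
    2 * n ≤ 5 * S.ncard := by
  classical
  set S' : Finset (Fin n) := S.toFinset with hS'
  have hcard : S.ncard = S'.card := Set.ncard_eq_toFinset_card' S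
  set T : Finset (Fin n) := S'ᶜ with hT
  have hmemS : ∀ v : Fin n, v ∈ S' ↔ v ∈ S := fun v => Set.mem_toFinset
  have hmemT : ∀ v : Fin n, v ∈ T → v ∉ S := by
    intro v hv
    rw [hT, Finset.mem_compl] at hv
    rw [← hmemS]; exact hv
  set D : Fin n → Finset (Fin n) := fun v => S'.filter (fun s => G.Adj s v) with hD
  have hDle : ∀ v, (D v).card ≤ 2 := by
    intro v
    by_contra h
    push_neg at h
    obtain ⟨x, y, z, hx, hy, hz, hxy, hxz, hyz⟩ := Finset.two_lt_card_iff.mp h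
    rcases hdeg v x y z (G.adj_symm (Finset.mem_filter.mp hx).2)
      (G.adj_symm (Finset.mem_filter.mp hy).2) (G.adj_symm (Finset.mem_filter.mp hz).2) with
      h | h | h
    exacts [hxy h, hxz h, hyz h]
  have hD1 : ∀ v ∈ T, 1 ≤ (D v).card := by
    intro v hv
    obtain ⟨u, hu, huv⟩ := hdom v (hmemT v hv)
    exact Finset.card_pos.mpr ⟨u, Finset.mem_filter.mpr ⟨(hmemS u).mpr hu, huv⟩⟩
  set wt : Fin n → ℕ := fun v => if (D v).card = 1 then 2 else 1 with hwt
  have hw2 : ∀ v, wt v ≤ 2 := by intro v; rw [hwt]; dsimp only; split <;> omega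
  have hkey : ∀ v ∈ T, (D v).card * wt v = 2 := by
    intro v hv
    have h1 := hD1 v hv
    have h2 := hDle v
    rw [hwt]; dsimp only
    split
    · omega
    · omega
  have h3bound : ∀ s ∈ S', ∑ v ∈ T.filter (fun v => G.Adj s v), wt v ≤ 3 := by
    intro s hs
    set B := T.filter (fun v => G.Adj s v) with hB
    have hBle : B.card ≤ 2 := by
      by_contra h
      push_neg at h
      obtain ⟨x, y, z, hx, hy, hz, hxy, hxz, hyz⟩ := Finset.two_lt_card_iff.mp h
      rcases hdeg s x y z (Finset.mem_filter.mp hx).2 (Finset.mem_filter.mp hy).2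
        (Finset.mem_filter.mp hz).2 with h | h | h
      exacts [hxy h, hxz h, hyz h]
    rcases (by omega : B.card = 0 ∨ B.card = 1 ∨ B.card = 2) with h | h | h
    · rw [Finset.card_eq_zero.mp h]
      simp
    · obtain ⟨u, hu⟩ := Finset.card_eq_one.mp h
      rw [hu, Finset.sum_singleton]
      exact le_trans (hw2 u) (by norm_num)
    · obtain ⟨u, v, huv, hBe⟩ := Finset.card_eq_two.mp h
      rw [hBe, Finset.sum_pair huv]
      by_contra hcon
      push_neg at hcon
      have hu2 : wt u = 2 := by have := hw2 u; have := hw2 v; omega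
      have hv2 : wt v = 2 := by have := hw2 u; have := hw2 v; omega
      have hcu : (D u).card = 1 := by
        by_contra hne
        simp only [hwt, if_neg hne] at hu2
        omega
      have hcv : (D v).card = 1 := by
        by_contra hne
        simp only [hwt, if_neg hne] at hv2
        omega
      have huB : u ∈ B := by rw [hBe]; simp
      have hvB : v ∈ B := by rw [hBe]; simp
      have husadj : G.Adj s u := (Finset.mem_filter.mp huB).2
      have hvsadj : G.Adj s v := (Finset.mem_filter.mp hvB).2
      have huT : u ∈ T := (Finset.mem_filter.mp huB).1
      have hvT : v ∈ T := (Finset.mem_filter.mp hvB).1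
      have hsDu : s ∈ D u := Finset.mem_filter.mpr ⟨hs, husadj⟩
      have hsDv : s ∈ D v := Finset.mem_filter.mpr ⟨hs, hvsadj⟩
      have hDu : ∀ t, t ∈ D u → t = s := by
        intro t ht
        obtain ⟨x, hx⟩ := Finset.card_eq_one.mp hcu
        rw [hx, Finset.mem_singleton] at ht hsDu
        rw [ht, hsDu]
      have hDv : ∀ t, t ∈ D v → t = s := by
        intro t ht
        obtain ⟨x, hx⟩ := Finset.card_eq_one.mp hcv
        rw [hx, Finset.mem_singleton] at ht hsDv
        rw [ht, hsDv]
      obtain ⟨t, htS, hxor⟩ := hgen u v (hmemT u huT) (hmemT v hvT) huv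
      have htS' : t ∈ S' := (hmemS t).mpr htS
      rcases hxor with ⟨h1, h2⟩ | ⟨h1, h2⟩
      · have hts : t = s := hDu t (Finset.mem_filter.mpr ⟨htS', h1⟩)
        exact h2 (hts ▸ hvsadj)
      · have hts : t = s := hDv t (Finset.mem_filter.mpr ⟨htS', h1⟩)
        exact h2 (hts ▸ husadj)
  have main : 2 * T.card ≤ 3 * S'.card := by
    calc 2 * T.card = ∑ _v ∈ T, 2 := by rw [Finset.sum_const, smul_eq_mul, mul_comm]
      _ = ∑ v ∈ T, ∑ _s ∈ D v, wt v := by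
          refine Finset.sum_congr rfl fun v hv => ?_
          rw [Finset.sum_const, smul_eq_mul, hkey v hv]
      _ = ∑ v ∈ T, ∑ s ∈ S', if G.Adj s v then wt v else 0 := by
          refine Finset.sum_congr rfl fun v _hv => ?_
          rw [Finset.sum_filter]
      _ = ∑ s ∈ S', ∑ v ∈ T, if G.Adj s v then wt v else 0 := Finset.sum_comm
      _ = ∑ s ∈ S', ∑ v ∈ T.filter (fun v => G.Adj s v), wt v := by
          exact Finset.sum_congr rfl fun s _hs => (Finset.sum_filter _ _).symm
      _ ≤ ∑ _s ∈ S', 3 := Finset.sum_le_sum h3bound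
      _ = 3 * S'.card := by rw [Finset.sum_const, smul_eq_mul, mul_comm]
  have htotal : S'.card + T.card = n := by
    rw [hT, Finset.card_add_card_compl, Fintype.card_fin]
  omega

lemma count_base (N : ℕ) :
    ((Finset.range N).filter (fun m => m % 5 = 1 ∨ m % 5 = 3)).card
      = 2 * (N / 5) + (if 2 ≤ N % 5 then 1 else 0) + (if 4 ≤ N % 5 then 1 else 0) := by
  induction N with
  | zero => simp
  | succ k ih =>
    rw [Finset.range_add_one, Finset.filter_insert]
    by_cases h : (k % 5 = 1 ∨ k % 5 = 3)
    · rw [if_pos h, Finset.card_insert_of_notMem (by simp), ih]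
      split_ifs <;> omega
    · rw [if_neg h, ih]
      split_ifs <;> omega

lemma card_fin_filter (n : ℕ) (p : ℕ → Prop) [DecidablePred p]
    (q : Fin n → Prop) [DecidablePred q] (hq : ∀ v : Fin n, q v ↔ p v.val) :
    (Finset.univ.filter q).card = ((Finset.range n).filter p).card := by
  apply Finset.card_bij (fun v _ => v.val)
  · intro v hv
    simp only [Finset.mem_filter, Finset.mem_range]
    exact ⟨v.isLt, (hq v).mp (Finset.mem_filter.mp hv).2⟩
  · intro u _ v _ h
    exact Fin.ext h
  · intro m hm
    simp only [Finset.mem_filter, Finset.mem_range] at hm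
    exact ⟨⟨m, hm.1⟩, Finset.mem_filter.mpr ⟨Finset.mem_univ _, (hq _).mpr hm.2⟩, rfl⟩

/-- The small adjacency generator used when `n % 5 = 1`. -/
def S1 (n : ℕ) : Finset (Fin n) :=
  Finset.univ.filter (fun v => v.val % 5 = 1 ∨ v.val % 5 = 3)

/-- The small adjacency generator used when `n % 5 = 3`. -/
def S3 (n : ℕ) : Finset (Fin n) :=
  Finset.univ.filter (fun v => ((v.val % 5 = 1 ∨ v.val % 5 = 3) ∧ v.val + 2 ≠ n) ∨ v.val + 1 = n)

lemma S1_card {n : ℕ} (h5 : n % 5 = 1) : (S1 n).card = 2 * (n / 5) := by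
  rw [S1, card_fin_filter n (fun m => m % 5 = 1 ∨ m % 5 = 3) _ (fun v => Iff.rfl), count_base]
  split_ifs <;> omega

lemma S3_card {n : ℕ} (hn : 8 ≤ n) (h5 : n % 5 = 3) : (S3 n).card = 2 * (n / 5) + 1 := by
  rw [S3, card_fin_filter n (fun m => ((m % 5 = 1 ∨ m % 5 = 3) ∧ m + 2 ≠ n) ∨ m + 1 = n) _
    (fun v => Iff.rfl)]
  have hset : (Finset.range n).filter
        (fun m => ((m % 5 = 1 ∨ m % 5 = 3) ∧ m + 2 ≠ n) ∨ m + 1 = n)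
      = insert (n-1) (((Finset.range n).filter (fun m => m % 5 = 1 ∨ m % 5 = 3)).erase (n-2)) := by
    ext m
    simp only [Finset.mem_filter, Finset.mem_range, Finset.mem_insert, Finset.mem_erase]
    omega
  rw [hset, Finset.card_insert_of_notMem
      (by simp only [Finset.mem_erase, Finset.mem_filter, Finset.mem_range]; omega),
    Finset.card_erase_of_mem
      (by simp only [Finset.mem_filter, Finset.mem_range]; omega),
    count_base]
  split_ifs <;> omega

lemma gen1 {n : ℕ} (G : SimpleGraph (Fin n)) (w : ℕ) (hw : w ≤ 1) (hn : 7 ≤ n)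
    (h5 : n % 5 = 1)
    (hadj : ∀ u v : Fin n, G.Adj u v ↔ adjRel n w u.val v.val) :
    IsAdjGen G ↑(S1 n) := by
  intro x y hx hy hxy
  have hx' : ¬(x.val % 5 = 1 ∨ x.val % 5 = 3) := fun h => hx (by simpa [S1] using h)
  have hy' : ¬(y.val % 5 = 1 ∨ y.val % 5 = 3) := fun h => hy (by simpa [S1] using h)
  obtain ⟨m, hm, hP, hxor⟩ := key1 n w x.val y.val hw hn h5 x.isLt y.isLt
    (fun h => hxy (Fin.ext h)) hx' hy'
  refine ⟨⟨m, hm⟩, by simpa [S1] using hP, ?_⟩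
  rcases hxor with ⟨h1, h2⟩ | ⟨h1, h2⟩
  · exact Or.inl ⟨(hadj _ _).mpr h1, fun h => h2 ((hadj _ _).mp h)⟩
  · exact Or.inr ⟨(hadj _ _).mpr h1, fun h => h2 ((hadj _ _).mp h)⟩

lemma gen3 {n : ℕ} (G : SimpleGraph (Fin n)) (w : ℕ) (hw : w ≤ 1) (hn : 8 ≤ n)
    (h5 : n % 5 = 3)
    (hadj : ∀ u v : Fin n, G.Adj u v ↔ adjRel n w u.val v.val) :
    IsAdjGen G ↑(S3 n) := by
  intro x y hx hy hxy
  have hx' : ¬(((x.val % 5 = 1 ∨ x.val % 5 = 3) ∧ x.val + 2 ≠ n) ∨ x.val + 1 = n) :=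
    fun h => hx (by simpa [S3] using h)
  have hy' : ¬(((y.val % 5 = 1 ∨ y.val % 5 = 3) ∧ y.val + 2 ≠ n) ∨ y.val + 1 = n) :=
    fun h => hy (by simpa [S3] using h)
  obtain ⟨m, hm, hP, hxor⟩ := key3 n w x.val y.val hw hn h5 x.isLt y.isLt
    (fun h => hxy (Fin.ext h)) hx' hy'
  refine ⟨⟨m, hm⟩, by simpa [S3] using hP, ?_⟩
  rcases hxor with ⟨h1, h2⟩ | ⟨h1, h2⟩
  · exact Or.inl ⟨(hadj _ _).mpr h1, fun h => h2 ((hadj _ _).mp h)⟩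
  · exact Or.inr ⟨(hadj _ _).mpr h1, fun h => h2 ((hadj _ _).mp h)⟩

lemma adjDim_le_of_gen {V : Type*} (G : SimpleGraph V) (S : Set V) (h : IsAdjGen G S) :
    adjDim G ≤ S.ncard := by
  have hmem : S.ncard ∈ {k | ∃ T : Set V, T.ncard = k ∧ IsSimAdjGen {G} T} :=
    ⟨S, rfl, fun H hH => by rw [Set.mem_singleton_iff] at hH; rw [hH]; exact h⟩
  exact Nat.sInf_le hmem

theorem statement_8 (n : ℕ) (hn : 7 ≤ n) (h15 : n % 5 = 1 ∨ n % 5 = 3) :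
    (∀ B : Set (Fin n), IsAdjBasis (SimpleGraph.pathGraph n) B →
      ¬ IsDomSet (SimpleGraph.pathGraph n) B) ∧
    (∀ B : Set (Fin n), IsAdjBasis (SimpleGraph.cycleGraph n) B →
      ¬ IsDomSet (SimpleGraph.cycleGraph n) B) := by
  have hpadj : ∀ u v : Fin n, (SimpleGraph.pathGraph n).Adj u v ↔ adjRel n 0 u.val v.val :=
    fun u v => path_adjRel u v
  have hcadj : ∀ u v : Fin n, (SimpleGraph.cycleGraph n).Adj u v ↔ adjRel n 1 u.val v.val :=
    fun u v => cycle_adjRel (by omega) u v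
  constructor
  · intro B hB hdom
    obtain ⟨hgen, hcard⟩ := hB
    have hlow := lower_bound _ (fun s a b c => three_nbrs _ 0 hpadj s a b c) B hgen hdom
    rcases h15 with h5 | h5
    · have hdim := adjDim_le_of_gen _ _ (gen1 (SimpleGraph.pathGraph n) 0 (by omega) hn h5 hpadj)
      rw [Set.ncard_coe_finset, S1_card h5] at hdim
      omega
    · have hdim := adjDim_le_of_gen _ _
        (gen3 (SimpleGraph.pathGraph n) 0 (by omega) (by omega) h5 hpadj)
      rw [Set.ncard_coe_finset, S3_card (by omega) h5] at hdim
      omega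
  · intro B hB hdom
    obtain ⟨hgen, hcard⟩ := hB
    have hlow := lower_bound _ (fun s a b c => three_nbrs _ 1 hcadj s a b c) B hgen hdom
    rcases h15 with h5 | h5
    · have hdim := adjDim_le_of_gen _ _ (gen1 (SimpleGraph.cycleGraph n) 1 (by omega) hn h5 hcadj)
      rw [Set.ncard_coe_finset, S1_card h5] at hdim
      omega
    · have hdim := adjDim_le_of_gen _ _
        (gen3 (SimpleGraph.cycleGraph n) 1 (by omega) (by omega) h5 hcadj)
      rw [Set.ncard_coe_finset, S3_card (by omega) h5] at hdim
      omega
end
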